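/- Let G₁ and G₂ be groups with asynchronous combings L₁ over X₁ and L₂ over X₂. Then the concatenation L₁L₂ = {vw : v ∈ L₁, w ∈ L₂} is an asynchronous combing for the direct product G₁ × G₂ over the generating set X₁ ∪ X₂ (with X₁ generating G₁ × {e} and X₂ generating {e} × G₂). Moreover, if L₁ and L₂ are bijective then L₁L₂ is bijective. -/

import Mathlib

/-- The group element represented by a word. -/
def evalW {X G : Type*} [Group G] (π : X → G) (w : List X) : G := (w.map π).prod

/-- The group element represented by the length-`t` prefix of a word. -/
def evalP {X G : Type*} [Group G] (π : X → G) (w : List X) (t : ℕ) : G :=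
  ((w.take t).map π).prod

/-- `g` and `h` are at word-metric distance at most `K` (w.r.t. the generators `π x`). -/
def WDistLE {X G : Type*} [Group G] (π : X → G) (K : ℕ) (g h : G) : Prop :=
  ∃ l : List X, l.length ≤ K ∧ g * (l.map π).prod = h

/-- `v` and `w` synchronously `K`-fellow travel. -/
def SyncFT {X G : Type*} [Group G] (π : X → G) (K : ℕ) (v w : List X) : Prop :=
  ∀ t : ℕ, WDistLE π K (evalP π v t) (evalP π w t)

/-- `v` and `w` asynchronously `K`-fellow travel, via a monotone reparametrization
mapping `[0, |v|]` onto `[0, |w|]`. -/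
def AsyncFT {X G : Type*} [Group G] (π : X → G) (K : ℕ) (v w : List X) : Prop :=
  ∃ h : ℕ → ℕ, Monotone h ∧ h 0 = 0 ∧ h v.length = w.length ∧
    ∀ t : ℕ, WDistLE π K (evalP π v t) (evalP π w (h t))

/-- The generating set is inverse-closed. -/
def InvClosed {X G : Type*} [Group G] (π : X → G) : Prop :=
  ∀ x, ∃ x', π x' = (π x)⁻¹

/-- `L` is a language for `G`: it contains a representative of every element. -/
def IsLanguageFor {X G : Type*} [Group G] (π : X → G) (L : Set (List X)) : Prop :=
  ∀ g : G, ∃ w ∈ L, evalW π w = g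

/-- `L` contains exactly one representative of every element. -/
def IsBijectiveLang {X G : Type*} [Group G] (π : X → G) (L : Set (List X)) : Prop :=
  ∀ g : G, ∃! w, w ∈ L ∧ evalW π w = g

/-- The pairs of words for which a combing requires fellow travelling:
`w` represents `v`, or `v` times a generator. -/
def CombRel {X G : Type*} [Group G] (π : X → G) (v w : List X) : Prop :=
  evalW π w = evalW π v ∨ ∃ x, evalW π w = evalW π v * π x

/-- `L` is a synchronous combing with fellow traveller constant `K`. -/
def IsSyncCombing {X G : Type*} [Group G] (π : X → G) (L : Set (List X)) (K : ℕ) : Prop :=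
  IsLanguageFor π L ∧ ∀ v ∈ L, ∀ w ∈ L, CombRel π v w → SyncFT π K v w

/-- `L` is an asynchronous combing with fellow traveller constant `K`. -/
def IsAsyncCombing {X G : Type*} [Group G] (π : X → G) (L : Set (List X)) (K : ℕ) : Prop :=
  IsLanguageFor π L ∧ ∀ v ∈ L, ∀ w ∈ L, CombRel π v w → AsyncFT π K v w

/- ### Auxiliary lemmas -/

lemma stmt4_prodInl {X₁ X₂ G₁ G₂ : Type*} [Group G₁] [Group G₂] (π₁ : X₁ → G₁) (π₂ : X₂ → G₂)
    (v : List X₁) :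
    ((v.map Sum.inl).map (Sum.elim (fun x => ((π₁ x, 1) : G₁ × G₂)) (fun y => (1, π₂ y)))).prod
      = ((v.map π₁).prod, 1) := by
  induction v with
  | nil => simp; rfl
  | cons a l ih =>
    simp only [List.map_cons, List.prod_cons, ih, Sum.elim_inl, Prod.mk_mul_mk, one_mul, mul_one]

lemma stmt4_prodInr {X₁ X₂ G₁ G₂ : Type*} [Group G₁] [Group G₂] (π₁ : X₁ → G₁) (π₂ : X₂ → G₂)
    (w : List X₂) :
    ((w.map Sum.inr).map (Sum.elim (fun x => ((π₁ x, 1) : G₁ × G₂)) (fun y => (1, π₂ y)))).prod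
      = (1, (w.map π₂).prod) := by
  induction w with
  | nil => simp; rfl
  | cons a l ih =>
    simp only [List.map_cons, List.prod_cons, ih, Sum.elim_inr, Prod.mk_mul_mk, one_mul, mul_one]

lemma stmt4_evalW_cat {X₁ X₂ G₁ G₂ : Type*} [Group G₁] [Group G₂] (π₁ : X₁ → G₁) (π₂ : X₂ → G₂)
    (v : List X₁) (w : List X₂) :
    evalW (Sum.elim (fun x => ((π₁ x, 1) : G₁ × G₂)) (fun y => (1, π₂ y)))
        (v.map Sum.inl ++ w.map Sum.inr) = (evalW π₁ v, evalW π₂ w) := by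
  simp only [evalW, List.map_append, List.prod_append, stmt4_prodInl, stmt4_prodInr,
    Prod.mk_mul_mk, one_mul, mul_one]

lemma stmt4_evalP_cat_le {X₁ X₂ G₁ G₂ : Type*} [Group G₁] [Group G₂] (π₁ : X₁ → G₁)
    (π₂ : X₂ → G₂) (v : List X₁) (w : List X₂) {t : ℕ} (ht : t ≤ v.length) :
    evalP (Sum.elim (fun x => ((π₁ x, 1) : G₁ × G₂)) (fun y => (1, π₂ y)))
        (v.map Sum.inl ++ w.map Sum.inr) t = (evalP π₁ v t, 1) := by
  have h1 : (v.map Sum.inl ++ w.map Sum.inr).take t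
      = ((v.take t).map (Sum.inl : X₁ → X₁ ⊕ X₂)) := by
    rw [List.take_append]
    have : t - (v.map (Sum.inl : X₁ → X₁ ⊕ X₂)).length = 0 := by simp; omega
    rw [this]
    simp [List.map_take]
  rw [evalP, h1, stmt4_prodInl]
  rfl

lemma stmt4_evalP_cat_ge {X₁ X₂ G₁ G₂ : Type*} [Group G₁] [Group G₂] (π₁ : X₁ → G₁)
    (π₂ : X₂ → G₂) (v : List X₁) (w : List X₂) {t : ℕ} (ht : v.length ≤ t) :
    evalP (Sum.elim (fun x => ((π₁ x, 1) : G₁ × G₂)) (fun y => (1, π₂ y)))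
        (v.map Sum.inl ++ w.map Sum.inr) t = (evalW π₁ v, evalP π₂ w (t - v.length)) := by
  have h1 : (v.map Sum.inl ++ w.map Sum.inr).take t
      = v.map Sum.inl ++ ((w.take (t - v.length)).map (Sum.inr : X₂ → X₁ ⊕ X₂)) := by
    rw [List.take_append]
    rw [List.take_of_length_le (by simpa using ht)]
    simp [List.map_take]
  rw [evalP, h1, List.map_append, List.prod_append, stmt4_prodInl, stmt4_prodInr]
  simp [evalW, evalP]

lemma stmt4_filterMap_none {X Y : Type*} (w : List X) :
    (List.filterMap (fun _ => (none : Option Y)) w) = [] := by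
  induction w with
  | nil => rfl
  | cons a l ih => simpa using ih

lemma stmt4_cat_inj {X₁ X₂ : Type*} {v v' : List X₁} {w w' : List X₂}
    (h : v.map Sum.inl ++ w.map Sum.inr = v'.map Sum.inl ++ w'.map Sum.inr) :
    v = v' ∧ w = w' := by
  constructor
  · have := congrArg (List.filterMap Sum.getLeft?) h
    simpa [List.filterMap_append, List.filterMap_map, Function.comp_def, Sum.getLeft?,
      stmt4_filterMap_none] using this
  · have := congrArg (List.filterMap Sum.getRight?) h
    simpa [List.filterMap_append, List.filterMap_map, Function.comp_def, Sum.getRight?,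
      stmt4_filterMap_none] using this

/-- the concatenation of asynchronous combings of `G₁` and `G₂` is an
asynchronous combing of `G₁ × G₂`, bijective if both factors are. -/
theorem stmt4 {X₁ X₂ G₁ G₂ : Type*} [Group G₁] [Group G₂] [Fintype X₁] [Fintype X₂]
    (π₁ : X₁ → G₁) (π₂ : X₂ → G₂) (hinv₁ : InvClosed π₁) (hinv₂ : InvClosed π₂)
    (L₁ : Set (List X₁)) (L₂ : Set (List X₂)) (K₁ K₂ : ℕ)
    (hL₁ : IsAsyncCombing π₁ L₁ K₁) (hL₂ : IsAsyncCombing π₂ L₂ K₂) :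
    ∃ K : ℕ,
      IsAsyncCombing
        (Sum.elim (fun x => ((π₁ x, 1) : G₁ × G₂)) (fun y => ((1, π₂ y) : G₁ × G₂)))
        {u : List (X₁ ⊕ X₂) | ∃ v ∈ L₁, ∃ w ∈ L₂, u = v.map Sum.inl ++ w.map Sum.inr} K ∧
      (IsBijectiveLang π₁ L₁ → IsBijectiveLang π₂ L₂ →
        IsBijectiveLang
          (Sum.elim (fun x => ((π₁ x, 1) : G₁ × G₂)) (fun y => ((1, π₂ y) : G₁ × G₂)))
          {u : List (X₁ ⊕ X₂) | ∃ v ∈ L₁, ∃ w ∈ L₂, u = v.map Sum.inl ++ w.map Sum.inr}) := by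
  obtain ⟨hlang₁, hcomb₁⟩ := hL₁
  obtain ⟨hlang₂, hcomb₂⟩ := hL₂
  refine ⟨max K₁ (K₂ + 1), ⟨?_, ?_⟩, ?_⟩
  · -- language
    rintro ⟨g₁, g₂⟩
    obtain ⟨v, hv, hve⟩ := hlang₁ g₁
    obtain ⟨w, hw, hwe⟩ := hlang₂ g₂
    exact ⟨v.map Sum.inl ++ w.map Sum.inr, ⟨v, hv, w, hw, rfl⟩,
      by rw [stmt4_evalW_cat, hve, hwe]⟩
  · -- combing
    rintro u hu u' hu' hrel
    obtain ⟨v, hv, w, hw, rfl⟩ := hu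
    obtain ⟨v', hv', w', hw', rfl⟩ := hu'
    -- derive factor-wise comb relations
    have hfac : CombRel π₁ v v' ∧ CombRel π₂ w w' := by
      rcases hrel with heq | ⟨x, hx⟩
      · rw [stmt4_evalW_cat, stmt4_evalW_cat, Prod.ext_iff] at heq
        exact ⟨Or.inl heq.1, Or.inl heq.2⟩
      · rcases x with x₁ | x₂
        · rw [stmt4_evalW_cat, stmt4_evalW_cat, Sum.elim_inl, Prod.mk_mul_mk, mul_one,
            Prod.ext_iff] at hx
          exact ⟨Or.inr ⟨x₁, hx.1⟩, Or.inl hx.2⟩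
        · rw [stmt4_evalW_cat, stmt4_evalW_cat, Sum.elim_inr, Prod.mk_mul_mk, mul_one,
            Prod.ext_iff] at hx
          exact ⟨Or.inl hx.1, Or.inr ⟨x₂, hx.2⟩⟩
    obtain ⟨hc₁, hc₂⟩ := hfac
    obtain ⟨h₁, hm₁, h10, h1len, hd₁⟩ := hcomb₁ v hv v' hv' hc₁
    obtain ⟨h₂, hm₂, h20, h2len, hd₂⟩ := hcomb₂ w hw w' hw' hc₂
    refine ⟨fun t => if t ≤ v.length then h₁ t else v'.length + h₂ (t - v.length),
      ?_, ?_, ?_, ?_⟩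
    · -- monotone
      intro a b hab
      by_cases ha : a ≤ v.length <;> by_cases hb : b ≤ v.length
      · simpa [ha, hb] using hm₁ hab
      · have : h₁ a ≤ v'.length := h1len ▸ hm₁ ha
        simp only [if_pos ha, if_neg hb]
        omega
      · omega
      · simp only [if_neg ha, if_neg hb]
        have := hm₂ (show a - v.length ≤ b - v.length by omega)
        omega
    · simp [h10]
    · -- endpoint
      simp only [List.length_append, List.length_map]
      by_cases hw0 : v.length + w.length ≤ v.length
      · have hwl : w.length = 0 := by omega
        have : h₂ w.length = w'.length := h2len
        rw [hwl] at this
        rw [if_pos hw0]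
        have : h₁ (v.length + w.length) = v'.length := by rw [show v.length + w.length = v.length by omega, h1len]
        omega
      · rw [if_neg hw0]
        have : v.length + w.length - v.length = w.length := by omega
        rw [this, h2len]
    · -- fellow travel
      intro t
      by_cases ht : t ≤ v.length
      · simp only [if_pos ht]
        rw [stmt4_evalP_cat_le π₁ π₂ v w ht,
          stmt4_evalP_cat_le π₁ π₂ v' w' (h1len ▸ hm₁ ht)]
        obtain ⟨l, hl, he⟩ := hd₁ t
        refine ⟨l.map Sum.inl, by simpa using hl.trans (le_max_left _ _), ?_⟩
        rw [stmt4_prodInl, Prod.mk_mul_mk, mul_one, he]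
      · have ht' : v.length ≤ t := by omega
        simp only [if_neg ht]
        rw [stmt4_evalP_cat_ge π₁ π₂ v w ht',
          stmt4_evalP_cat_ge π₁ π₂ v' w' (Nat.le_add_right _ _),
          Nat.add_sub_cancel_left]
        obtain ⟨l₂, hl₂, he₂⟩ := hd₂ (t - v.length)
        rcases hc₁ with hcv | ⟨x₁, hcv⟩
        · refine ⟨l₂.map Sum.inr, by simpa using hl₂.trans (by omega : K₂ ≤ max K₁ (K₂ + 1)), ?_⟩
          rw [stmt4_prodInr, Prod.mk_mul_mk, mul_one, he₂, hcv]
        · refine ⟨Sum.inl x₁ :: l₂.map Sum.inr, by simp; omega, ?_⟩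
          rw [List.map_cons, List.prod_cons, stmt4_prodInr, Sum.elim_inl, Prod.mk_mul_mk,
            Prod.mk_mul_mk, one_mul, mul_one, he₂, hcv]
  · -- bijectivity
    intro hb₁ hb₂
    rintro ⟨g₁, g₂⟩
    obtain ⟨v, ⟨hv, hve⟩, hvu⟩ := hb₁ g₁
    obtain ⟨w, ⟨hw, hwe⟩, hwu⟩ := hb₂ g₂
    refine ⟨v.map Sum.inl ++ w.map Sum.inr,
      ⟨⟨v, hv, w, hw, rfl⟩, by rw [stmt4_evalW_cat, hve, hwe]⟩, ?_⟩
    rintro u ⟨⟨v', hv', w', hw', rfl⟩, hue⟩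
    rw [stmt4_evalW_cat, Prod.ext_iff] at hue
    have hv'v : v' = v := hvu v' ⟨hv', hue.1⟩
    have hw'w : w' = w := hwu w' ⟨hw', hue.2⟩
    rw [hv'v, hw'w]
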